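/- Let m ≥ 1, let λ₁, …, λ_m be positive real numbers with s := λ₁ + ⋯ + λ_m ≥ 1, and let x₁, …, x_m be nonnegative real numbers. If ∑_{i=1}^m λ_i x_i ≤ c s for some c > 0, then ∑_{i=1}^m λ_i (x_i − c)² ≤ (8/3) · ( c^{2−s} s³ / (min_{1≤i≤m} λ_i)² ) · ( c^s − x₁^{λ₁} ⋯ x_m^{λ_m} ). -/

import Mathlib

open Finset

noncomputable section

lemma aux_deriv (M t : ℝ) (ht : t ≠ 0) :
    HasDerivAt (fun y : ℝ => (y - 1) - (y - 1)^2 / (2*M) - Real.log y)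
      (1 - 2*(t-1)/(2*M) - t⁻¹) t := by
  have h1 : HasDerivAt (fun y : ℝ => y - 1) 1 t := (hasDerivAt_id t).sub_const 1
  have h2 : HasDerivAt (fun y : ℝ => (y-1)^2 / (2*M)) (2*(t-1)/(2*M)) t := by
    have := (h1.pow 2).div_const (2*M)
    simpa using this
  exact (h1.sub h2).sub (Real.hasDerivAt_log ht)

lemma log_le_quad {M y : ℝ} (hM : 1 ≤ M) (hy : 0 < y) (hyM : y ≤ M) :
    Real.log y ≤ (y - 1) - (y - 1)^2 / (2*M) := by
  have hM0 : 0 < M := lt_of_lt_of_le one_pos hM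
  set f : ℝ → ℝ := fun t => (t - 1) - (t - 1)^2 / (2*M) - Real.log t with hf
  have hf1 : f 1 = 0 := by simp [hf]
  have key : 0 ≤ f y := by
    rcases le_total y 1 with h | h
    · have cont : ContinuousOn f (Set.Icc y 1) := fun t ht =>
        ((aux_deriv M t (ne_of_gt (lt_of_lt_of_le hy ht.1))).continuousAt).continuousWithinAt
      have hanti : AntitoneOn f (Set.Icc y 1) := by
        apply antitoneOn_of_deriv_nonpos (convex_Icc _ _) cont
        · intro t ht
          rw [interior_Icc] at ht
          exact ((aux_deriv M t (ne_of_gt (hy.trans ht.1))).differentiableAt).differentiableWithinAt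
        · intro t ht
          rw [interior_Icc] at ht
          have ht0 : 0 < t := hy.trans ht.1
          rw [(aux_deriv M t ht0.ne').deriv]
          have heq : 1 - 2*(t-1)/(2*M) - t⁻¹ = (t-1)*(M-t)/(t*M) := by
            field_simp
            ring
          rw [heq]
          apply div_nonpos_of_nonpos_of_nonneg
          · apply mul_nonpos_of_nonpos_of_nonneg <;> nlinarith [ht.2]
          · positivity
      have := hanti (Set.left_mem_Icc.2 h) (Set.right_mem_Icc.2 h) h
      rw [hf1] at this
      exact this
    · have cont : ContinuousOn f (Set.Icc 1 y) := fun t ht =>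
        ((aux_deriv M t (ne_of_gt (lt_of_lt_of_le one_pos ht.1))).continuousAt).continuousWithinAt
      have hmono : MonotoneOn f (Set.Icc 1 y) := by
        apply monotoneOn_of_deriv_nonneg (convex_Icc _ _) cont
        · intro t ht
          rw [interior_Icc] at ht
          exact ((aux_deriv M t (ne_of_gt (lt_of_lt_of_le one_pos ht.1.le))).differentiableAt).differentiableWithinAt
        · intro t ht
          rw [interior_Icc] at ht
          have ht0 : 0 < t := lt_of_lt_of_le one_pos ht.1.le
          rw [(aux_deriv M t ht0.ne').deriv]
          have heq : 1 - 2*(t-1)/(2*M) - t⁻¹ = (t-1)*(M-t)/(t*M) := by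
            field_simp
            ring
          rw [heq]
          apply div_nonneg
          · apply mul_nonneg <;> nlinarith [ht.1, ht.2, hyM]
          · positivity
      have := hmono (Set.left_mem_Icc.2 h) (Set.right_mem_Icc.2 h) h
      rw [hf1] at this
      exact this
  simp only [hf] at key
  linarith

set_option maxHeartbeats 1000000 in
/-- Quantitative weighted arithmetic–geometric mean inequality. -/
theorem stmt_18 (m : ℕ) (hm : 1 ≤ m) (lam x : Fin m → ℝ) (c : ℝ)
    (hlam : ∀ i, 0 < lam i) (hx : ∀ i, 0 ≤ x i)
    (hs : 1 ≤ ∑ i, lam i) (hc : 0 < c)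
    (hsum : ∑ i, lam i * x i ≤ c * ∑ i, lam i) :
    ∑ i, lam i * (x i - c) ^ 2 ≤
      8 / 3 * (c ^ (2 - ∑ i, lam i) * (∑ i, lam i) ^ (3 : ℕ) / (⨅ i, lam i) ^ 2) *
        (c ^ (∑ i, lam i) - ∏ i, x i ^ lam i) := by
  have hne : Nonempty (Fin m) := ⟨⟨0, hm⟩⟩
  set s := ∑ i, lam i with hsdef
  set l0 := ⨅ i, lam i with hl0def
  obtain ⟨j, -, hj⟩ := Finset.exists_min_image univ lam ⟨⟨0, hm⟩, mem_univ _⟩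
  have hl0_le : ∀ i, l0 ≤ lam i := fun i => ciInf_le (Set.finite_range lam).bddBelow i
  have hl0_pos : 0 < l0 :=
    lt_of_lt_of_le (hlam j) (le_ciInf fun i => hj i (mem_univ i))
  have hs_pos : (0:ℝ) < s := lt_of_lt_of_le one_pos hs
  have hl0_le_s : l0 ≤ s :=
    (hl0_le j).trans (Finset.single_le_sum (fun i _ => (hlam i).le) (mem_univ j))
  set M := s / l0 with hMdef
  have hM1 : 1 ≤ M := (one_le_div hl0_pos).2 hl0_le_s
  have hM0 : 0 < M := lt_of_lt_of_le one_pos hM1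
  set y : Fin m → ℝ := fun i => x i / c with hydef
  have hy0 : ∀ i, 0 ≤ y i := fun i => div_nonneg (hx i) hc.le
  have hxy : ∀ i, x i = c * y i := fun i => by rw [hydef]; field_simp
  have hsumy : ∑ i, lam i * y i ≤ s := by
    have h1 : ∑ i, lam i * y i = (∑ i, lam i * x i) / c := by
      rw [Finset.sum_div]
      exact sum_congr rfl fun i _ => by rw [hydef]; ring
    rw [h1, div_le_iff₀ hc]
    nlinarith [hsum]
  have hyM : ∀ i, y i ≤ M := by
    intro i
    have h1 : lam i * x i ≤ c * s :=
      le_trans (Finset.single_le_sum (fun k _ => mul_nonneg (hlam k).le (hx k)) (mem_univ i)) hsum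
    rw [hydef, hMdef, div_le_div_iff₀ hc hl0_pos]
    nlinarith [mul_nonneg (sub_nonneg.2 (hl0_le i)) (hx i)]
  set Q := ∑ i, lam i * (y i - 1) ^ 2 with hQdef
  have hQ0 : 0 ≤ Q := sum_nonneg fun i _ => mul_nonneg (hlam i).le (sq_nonneg _)
  have hQle : Q ≤ s * M ^ 2 := by
    calc Q ≤ ∑ i, lam i * M ^ 2 := by
          apply sum_le_sum
          intro i _
          apply mul_le_mul_of_nonneg_left _ (hlam i).le
          nlinarith [mul_nonneg (by linarith [hyM i] : (0:ℝ) ≤ M - y i + 1)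
            (by linarith [hy0 i] : (0:ℝ) ≤ M + y i - 1)]
      _ = s * M ^ 2 := by rw [← Finset.sum_mul]
  have hT : ∑ i, lam i * (y i - 1) ≤ 0 := by
    have h1 : ∑ i, lam i * (y i - 1) = (∑ i, lam i * y i) - s := by
      rw [hsdef]
      simp [mul_sub, Finset.sum_sub_distrib]
    rw [h1]
    linarith
  have hP : ∏ i, y i ^ lam i ≤ Real.exp (-(Q / (2 * M))) := by
    by_cases hzero : ∃ i, y i = 0
    · obtain ⟨i, hi⟩ := hzero
      have h0 : ∏ i, y i ^ lam i = 0 :=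
        Finset.prod_eq_zero (mem_univ i) (by rw [hi]; exact Real.zero_rpow (hlam i).ne')
      rw [h0]; positivity
    · push_neg at hzero
      have hypos : ∀ i, 0 < y i := fun i => lt_of_le_of_ne (hy0 i) (Ne.symm (hzero i))
      have h1 : ∏ i, y i ^ lam i = Real.exp (∑ i, lam i * Real.log (y i)) := by
        rw [Real.exp_sum]
        exact prod_congr rfl fun i _ => by
          rw [Real.rpow_def_of_pos (hypos i), mul_comm]
      rw [h1, Real.exp_le_exp]
      calc ∑ i, lam i * Real.log (y i)
          ≤ ∑ i, lam i * ((y i - 1) - (y i - 1) ^ 2 / (2 * M)) :=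
            sum_le_sum fun i _ =>
              mul_le_mul_of_nonneg_left (log_le_quad hM1 (hypos i) (hyM i)) (hlam i).le
        _ = (∑ i, lam i * (y i - 1)) - Q / (2 * M) := by
            simp only [mul_sub]
            rw [Finset.sum_sub_distrib, hQdef, Finset.sum_div]
            congr 1
            exact sum_congr rfl fun i _ => (mul_div_assoc _ _ _).symm
        _ ≤ -(Q / (2 * M)) := by linarith
  set U := s * M / 2 with hUdef
  have hU : 1 / 2 ≤ U := by rw [hUdef]; nlinarith
  have hU0 : 0 < U := lt_of_lt_of_le (by norm_num) hU
  have hexpU : Real.exp (-U) ≤ 5 / 8 := by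
    have hsq : Real.exp (1/2 : ℝ) * Real.exp (1/2 : ℝ) = Real.exp 1 := by
      rw [← Real.exp_add]; norm_num
    have he1 : (2.7182818283 : ℝ) < Real.exp 1 := Real.exp_one_gt_d9
    have h85 : (8/5 : ℝ) ≤ Real.exp (1/2 : ℝ) := by
      nlinarith [Real.exp_pos (1/2 : ℝ)]
    have h2 : Real.exp (-(1/2 : ℝ)) ≤ 5/8 := by
      rw [Real.exp_neg]
      rw [inv_le_comm₀ (Real.exp_pos _) (by norm_num)]
      norm_num
      linarith
    have h1 : Real.exp (-U) ≤ Real.exp (-(1/2 : ℝ)) := Real.exp_le_exp.2 (by linarith)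
    linarith
  set u := Q / (2 * M) with hudef
  have hu0 : 0 ≤ u := div_nonneg hQ0 (by positivity)
  have huU : u ≤ U := by
    rw [hudef, hUdef, div_le_div_iff₀ (by positivity) (by norm_num)]
    nlinarith
  have hchord : Real.exp (-u) ≤ 1 - u / U * (3/8) := by
    have hfrac : u / U ≤ 1 := (div_le_one hU0).2 huU
    have hfrac0 : 0 ≤ u / U := div_nonneg hu0 hU0.le
    have h := convexOn_exp.2 (Set.mem_univ (0:ℝ)) (Set.mem_univ (-U))
      (by linarith : (0:ℝ) ≤ 1 - u / U) hfrac0 (by ring)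
    simp only [smul_eq_mul] at h
    have hx0 : (1 - u / U) * (0:ℝ) + u / U * (-U) = -u := by field_simp; ring
    rw [hx0, Real.exp_zero] at h
    have h2 : u / U * Real.exp (-U) ≤ u / U * (5/8) :=
      mul_le_mul_of_nonneg_left hexpU hfrac0
    have h3 : (1 - u / U) * 1 = 1 - u / U := by ring
    nlinarith
  have hfinal : Q ≤ 8 / 3 * (s * M ^ 2) * (1 - ∏ i, y i ^ lam i) := by
    have h1 : u / U * (3/8) ≤ 1 - ∏ i, y i ^ lam i := by linarith
    have h2 : u / U * (3/8) = 3 / 8 * Q / (s * M ^ 2) := by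
      rw [hudef, hUdef]
      field_simp
    rw [h2] at h1
    calc Q = 8 / 3 * (s * M ^ 2) * (3 / 8 * Q / (s * M ^ 2)) := by
          field_simp
        _ ≤ _ := mul_le_mul_of_nonneg_left h1 (by positivity)
  have hA : ∑ i, lam i * (x i - c) ^ 2 = c ^ 2 * Q := by
    rw [hQdef, Finset.mul_sum]
    exact sum_congr rfl fun i _ => by rw [hxy i]; ring
  have hB : ∏ i, x i ^ lam i = c ^ s * ∏ i, y i ^ lam i := by
    calc ∏ i, x i ^ lam i = ∏ i, (c ^ lam i * y i ^ lam i) :=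
          prod_congr rfl fun i _ => by rw [hxy i, Real.mul_rpow hc.le (hy0 i)]
      _ = (∏ i, c ^ lam i) * ∏ i, y i ^ lam i := Finset.prod_mul_distrib
      _ = c ^ s * ∏ i, y i ^ lam i := by rw [← Real.rpow_sum_of_pos hc]
  rw [hA, hB]
  have e1 : c ^ (2 - s) * c ^ s = c ^ (2:ℕ) := by
    rw [← Real.rpow_add hc, ← Real.rpow_natCast c 2]
    norm_num
  have e2 : (s:ℝ) ^ (3:ℕ) / l0 ^ 2 = s * M ^ 2 := by
    rw [hMdef]
    field_simp
  have key : 8 / 3 * (c ^ (2 - s) * s ^ (3:ℕ) / l0 ^ 2) * (c ^ s - c ^ s * ∏ i, y i ^ lam i)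
      = c ^ 2 * (8 / 3 * (s * M ^ 2) * (1 - ∏ i, y i ^ lam i)) := by
    calc 8 / 3 * (c ^ (2 - s) * s ^ (3:ℕ) / l0 ^ 2) * (c ^ s - c ^ s * ∏ i, y i ^ lam i)
        = (c ^ (2 - s) * c ^ s) * (s ^ (3:ℕ) / l0 ^ 2) * (8 / 3 * (1 - ∏ i, y i ^ lam i)) := by
          ring
      _ = c ^ 2 * (8 / 3 * (s * M ^ 2) * (1 - ∏ i, y i ^ lam i)) := by rw [e1, e2]; ring
  rw [key]
  exact mul_le_mul_of_nonneg_left hfinal (by positivity)
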